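/- Let A ∈ ℝ^{n×n}, B ∈ ℝ^{n×m}, Q, Q_f ∈ ℝ^{n×n}, R ∈ ℝ^{m×m}, let w_1,…,w_S be real weights with Σ_s w_s = 1, and let disturbances d_{k,s} ∈ ℝⁿ satisfy Σ_{s=1}^S w_s d_{k,s} = 0 for every k = 0,…,N−1. Define the deviation sequences e_{0,s} = 0 and e_{k+1,s} = A e_{k,s} + d_{k,s}, and set C = Σ_{s=1}^S w_s [ Σ_{k=0}^{N−1} e_{k,s}ᵀ Q e_{k,s} + e_{N,s}ᵀ Q_f e_{N,s} ]. Then for every initial state x̂ ∈ ℝⁿ and every (shared, open-loop) control sequence u_0,…,u_{N−1} ∈ ℝᵐ, letting x_{k,s} denote the scenario trajectories (x_{0,s} = x̂, x_{k+1,s} = A x_{k,s} + B u_k + d_{k,s}) and x̄_k the nominal trajectory (x̄_0 = x̂, x̄_{k+1} = A x̄_k + B u_k), one has Σ_{s=1}^S w_s [ Σ_{k=0}^{N−1} ( x_{k,s}ᵀ Q x_{k,s} + u_kᵀ R u_k ) + x_{N,s}ᵀ Q_f x_{N,s} ] = Σ_{k=0}^{N−1} ( x̄_kᵀ Q x̄_k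 + u_kᵀ R u_k ) + x̄_Nᵀ Q_f x̄_N + C; in particular C does not depend on x̂ or on the control sequence. -/
import Mathlib
open Matrix Finset

lemma dot_sum {n S : ℕ} (a : Fin n → ℝ) (f : Fin S → Fin n → ℝ) :
    a ⬝ᵥ (∑ s, f s) = ∑ s, a ⬝ᵥ f s := by
  simp only [dotProduct, Finset.sum_apply, Finset.mul_sum]
  exact Finset.sum_comm

lemma sum_dot {n S : ℕ} (a : Fin n → ℝ) (f : Fin S → Fin n → ℝ) :
    (∑ s, f s) ⬝ᵥ a = ∑ s, f s ⬝ᵥ a := by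
  simp only [dotProduct, Finset.sum_apply, Finset.sum_mul]
  exact Finset.sum_comm

lemma cross_sum_zero {n S : ℕ} (M : Matrix (Fin n) (Fin n) ℝ) (a : Fin n → ℝ)
    (w : Fin S → ℝ) (v : Fin S → Fin n → ℝ) (hv : ∑ s, w s • v s = 0) :
    ∑ s, w s * (a ⬝ᵥ M.mulVec (v s) + v s ⬝ᵥ M.mulVec a) = 0 := by
  have h1 : ∑ s, w s * (a ⬝ᵥ M.mulVec (v s) + v s ⬝ᵥ M.mulVec a)
      = a ⬝ᵥ M.mulVec (∑ s, w s • v s) + (∑ s, w s • v s) ⬝ᵥ M.mulVec a := by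
    have hm : M.mulVec (∑ s, w s • v s) = ∑ s, M.mulVec (w s • v s) :=
      map_sum (M.mulVecLin) _ _
    rw [hm, dot_sum, sum_dot, ← sum_add_distrib]
    congr 1; ext s
    simp [mulVec_smul, dotProduct_smul, smul_dotProduct, smul_eq_mul, mul_add]
  rw [h1, hv]; simp

lemma mulVec_sumv {n p S : ℕ} (M : Matrix (Fin n) (Fin p) ℝ) (f : Fin S → Fin p → ℝ) :
    M.mulVec (∑ s, f s) = ∑ s, M.mulVec (f s) := by
  ext j
  simp [mulVec, dotProduct, Finset.sum_apply, Finset.mul_sum]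
  exact Finset.sum_comm

lemma quad_expand {n : ℕ} (M : Matrix (Fin n) (Fin n) ℝ) (a b : Fin n → ℝ) :
    (a + b) ⬝ᵥ M.mulVec (a + b) =
      a ⬝ᵥ M.mulVec a + (a ⬝ᵥ M.mulVec b + b ⬝ᵥ M.mulVec a) + b ⬝ᵥ M.mulVec b := by
  simp [mulVec_add, dotProduct_add, add_dotProduct]; ring

theorem multistage_cost_eq_nominal_cost_add_const
    {n m N S : ℕ}
    (A : Matrix (Fin n) (Fin n) ℝ) (B : Matrix (Fin n) (Fin m) ℝ)
    (Q Qf : Matrix (Fin n) (Fin n) ℝ) (R : Matrix (Fin m) (Fin m) ℝ)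
    (w : Fin S → ℝ) (hw1 : ∑ s, w s = 1)
    (d : Fin N → Fin S → Fin n → ℝ)
    (hd : ∀ k : Fin N, ∑ s, w s • d k s = 0)
    (e : Fin (N + 1) → Fin S → Fin n → ℝ)
    (he0 : ∀ s, e 0 s = 0)
    (herec : ∀ (k : Fin N) (s : Fin S), e k.succ s = A.mulVec (e k.castSucc s) + d k s)
    (C : ℝ)
    (hC : C = ∑ s, w s *
      ((∑ k : Fin N, e k.castSucc s ⬝ᵥ Q.mulVec (e k.castSucc s)) +
        e (Fin.last N) s ⬝ᵥ Qf.mulVec (e (Fin.last N) s)))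
    (xhat : Fin n → ℝ) (u : Fin N → Fin m → ℝ)
    (x : Fin (N + 1) → Fin S → Fin n → ℝ)
    (hx0 : ∀ s, x 0 s = xhat)
    (hxdyn : ∀ (k : Fin N) (s : Fin S),
      x k.succ s = A.mulVec (x k.castSucc s) + B.mulVec (u k) + d k s)
    (xbar : Fin (N + 1) → Fin n → ℝ)
    (hxbar0 : xbar 0 = xhat)
    (hxbardyn : ∀ k : Fin N, xbar k.succ = A.mulVec (xbar k.castSucc) + B.mulVec (u k)) :
    ∑ s, w s *
        ((∑ k : Fin N, (x k.castSucc s ⬝ᵥ Q.mulVec (x k.castSucc s) +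
            u k ⬝ᵥ R.mulVec (u k))) +
          x (Fin.last N) s ⬝ᵥ Qf.mulVec (x (Fin.last N) s)) =
      (∑ k : Fin N, (xbar k.castSucc ⬝ᵥ Q.mulVec (xbar k.castSucc) +
          u k ⬝ᵥ R.mulVec (u k))) +
        xbar (Fin.last N) ⬝ᵥ Qf.mulVec (xbar (Fin.last N)) + C := by
  -- x = xbar + e
  have hxe : ∀ (k : Fin (N + 1)) (s : Fin S), x k s = xbar k + e k s := by
    intro k
    induction k using Fin.induction with
    | zero => intro s; simp [hx0, hxbar0, he0]
    | succ i ih =>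
        intro s
        rw [hxdyn i s, hxbardyn i, herec i s, ih s, mulVec_add]
        abel
  -- weighted deviation mean is zero
  have hwe : ∀ k : Fin (N + 1), ∑ s, w s • e k s = 0 := by
    intro k
    induction k using Fin.induction with
    | zero => simp [he0]
    | succ i ih =>
        have : ∑ s, w s • e i.succ s
            = A.mulVec (∑ s, w s • e i.castSucc s) + ∑ s, w s • d i s := by
          rw [mulVec_sumv, ← sum_add_distrib]
          congr 1; ext s
          rw [herec i s]
          simp [mulVec_smul, smul_add, mul_add]
        rw [this, ih, hd i]
        simp
  -- nominal cost
  set nom : ℝ := (∑ k : Fin N, (xbar k.castSucc ⬝ᵥ Q.mulVec (xbar k.castSucc) +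
      u k ⬝ᵥ R.mulVec (u k))) + xbar (Fin.last N) ⬝ᵥ Qf.mulVec (xbar (Fin.last N)) with hnom
  have hsplit : ∀ s : Fin S,
      ((∑ k : Fin N, (x k.castSucc s ⬝ᵥ Q.mulVec (x k.castSucc s) +
          u k ⬝ᵥ R.mulVec (u k))) +
        x (Fin.last N) s ⬝ᵥ Qf.mulVec (x (Fin.last N) s))
      = nom
        + ((∑ k : Fin N, (xbar k.castSucc ⬝ᵥ Q.mulVec (e k.castSucc s)
              + e k.castSucc s ⬝ᵥ Q.mulVec (xbar k.castSucc)))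
            + (xbar (Fin.last N) ⬝ᵥ Qf.mulVec (e (Fin.last N) s)
              + e (Fin.last N) s ⬝ᵥ Qf.mulVec (xbar (Fin.last N))))
        + ((∑ k : Fin N, e k.castSucc s ⬝ᵥ Q.mulVec (e k.castSucc s)) +
            e (Fin.last N) s ⬝ᵥ Qf.mulVec (e (Fin.last N) s)) := by
    intro s
    simp only [hxe, quad_expand, hnom]
    simp only [Finset.sum_add_distrib]
    ring
  calc ∑ s, w s * ((∑ k : Fin N, (x k.castSucc s ⬝ᵥ Q.mulVec (x k.castSucc s) +
            u k ⬝ᵥ R.mulVec (u k))) +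
          x (Fin.last N) s ⬝ᵥ Qf.mulVec (x (Fin.last N) s))
      = ∑ s, (w s * nom
          + w s * ((∑ k : Fin N, (xbar k.castSucc ⬝ᵥ Q.mulVec (e k.castSucc s)
              + e k.castSucc s ⬝ᵥ Q.mulVec (xbar k.castSucc)))
            + (xbar (Fin.last N) ⬝ᵥ Qf.mulVec (e (Fin.last N) s)
              + e (Fin.last N) s ⬝ᵥ Qf.mulVec (xbar (Fin.last N))))
          + w s * ((∑ k : Fin N, e k.castSucc s ⬝ᵥ Q.mulVec (e k.castSucc s)) +
            e (Fin.last N) s ⬝ᵥ Qf.mulVec (e (Fin.last N) s))) := by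
        apply Finset.sum_congr rfl
        intro s _
        rw [hsplit s]; ring
    _ = nom + C := by
        rw [Finset.sum_add_distrib, Finset.sum_add_distrib, ← Finset.sum_mul, hw1, one_mul,
          ← hC]
        have hcross : ∑ s, w s * ((∑ k : Fin N, (xbar k.castSucc ⬝ᵥ Q.mulVec (e k.castSucc s)
              + e k.castSucc s ⬝ᵥ Q.mulVec (xbar k.castSucc)))
            + (xbar (Fin.last N) ⬝ᵥ Qf.mulVec (e (Fin.last N) s)
              + e (Fin.last N) s ⬝ᵥ Qf.mulVec (xbar (Fin.last N)))) = 0 := by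
          have h1 : ∀ s, w s * ((∑ k : Fin N, (xbar k.castSucc ⬝ᵥ Q.mulVec (e k.castSucc s)
              + e k.castSucc s ⬝ᵥ Q.mulVec (xbar k.castSucc)))
            + (xbar (Fin.last N) ⬝ᵥ Qf.mulVec (e (Fin.last N) s)
              + e (Fin.last N) s ⬝ᵥ Qf.mulVec (xbar (Fin.last N))))
            = (∑ k : Fin N, w s * (xbar k.castSucc ⬝ᵥ Q.mulVec (e k.castSucc s)
              + e k.castSucc s ⬝ᵥ Q.mulVec (xbar k.castSucc)))
            + w s * (xbar (Fin.last N) ⬝ᵥ Qf.mulVec (e (Fin.last N) s)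
              + e (Fin.last N) s ⬝ᵥ Qf.mulVec (xbar (Fin.last N))) := by
            intro s; rw [mul_add, Finset.mul_sum]
          simp only [h1]
          rw [Finset.sum_add_distrib, Finset.sum_comm]
          rw [cross_sum_zero Qf (xbar (Fin.last N)) w (fun s => e (Fin.last N) s)
            (hwe (Fin.last N))]
          have : ∀ k : Fin N, ∑ s, w s * (xbar k.castSucc ⬝ᵥ Q.mulVec (e k.castSucc s)
              + e k.castSucc s ⬝ᵥ Q.mulVec (xbar k.castSucc)) = 0 := fun k =>
            cross_sum_zero Q (xbar k.castSucc) w (fun s => e k.castSucc s) (hwe k.castSucc)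
          simp [this]
        rw [hcross]
        ring
    _ = (∑ k : Fin N, (xbar k.castSucc ⬝ᵥ Q.mulVec (xbar k.castSucc) +
          u k ⬝ᵥ R.mulVec (u k))) +
        xbar (Fin.last N) ⬝ᵥ Qf.mulVec (xbar (Fin.last N)) + C := by rw [hnom]
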